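/- Let h : Aⁿ → Aⁿ be a map given coordinatewise by polynomials with coefficients in a commutative ring A (or induced by a polynomial map ℤ[x]ⁿ → ℤ[x]ⁿ, evaluated over A[[t]]). Then the map A[[t]]ⁿ → A[[t]]ⁿ sending ν ↦ ν + t·h(ν) is bijective. -/

import Mathlib

open PowerSeries MvPolynomial

/-- Polynomial evaluation respects congruence modulo `X^k`. -/
lemma aeval_sub_dvd {A : Type*} [CommRing A] {n : ℕ} (k : ℕ)
    (ν μ : Fin n → PowerSeries A)
    (hd : ∀ i, (PowerSeries.X : PowerSeries A) ^ k ∣ (ν i - μ i))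
    (p : MvPolynomial (Fin n) A) :
    (PowerSeries.X : PowerSeries A) ^ k ∣ (MvPolynomial.aeval ν p - MvPolynomial.aeval μ p) := by
  induction p using MvPolynomial.induction_on with
  | C a => simp
  | add p q hp hq =>
    rw [map_add, map_add, add_sub_add_comm]
    exact dvd_add hp hq
  | mul_X p i hp =>
    rw [map_mul, map_mul, MvPolynomial.aeval_X, MvPolynomial.aeval_X]
    have key : MvPolynomial.aeval ν p * ν i - MvPolynomial.aeval μ p * μ i
        = (MvPolynomial.aeval ν p - MvPolynomial.aeval μ p) * ν i
          + MvPolynomial.aeval μ p * (ν i - μ i) := by ring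
    rw [key]
    exact dvd_add (hp.mul_right _) ((hd i).mul_left _)

/-- If `h : Aⁿ → Aⁿ` is given coordinatewise by polynomials, then
`ν ↦ ν + t·h(ν)` is a bijection of `A[[t]]ⁿ`. -/
theorem bijective_add_t_mul_polynomial_map {A : Type*} [CommRing A] (n : ℕ)
    (h : Fin n → MvPolynomial (Fin n) A) :
    Function.Bijective (fun ν : Fin n → PowerSeries A =>
      fun i : Fin n => ν i + PowerSeries.X * MvPolynomial.aeval ν (h i)) := by
  constructor
  · -- Injectivity
    intro ν μ hνμ
    have hcoord : ∀ i, ν i + PowerSeries.X * MvPolynomial.aeval ν (h i)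
        = μ i + PowerSeries.X * MvPolynomial.aeval μ (h i) := fun i =>
      congrFun hνμ i
    have key : ∀ k : ℕ, ∀ i, (PowerSeries.X : PowerSeries A) ^ k ∣ (ν i - μ i) := by
      intro k
      induction k with
      | zero => intro i; simp
      | succ k ih =>
        intro i
        have h1 : (PowerSeries.X : PowerSeries A) ^ k ∣
            (MvPolynomial.aeval ν (h i) - MvPolynomial.aeval μ (h i)) :=
          aeval_sub_dvd k ν μ ih (h i)
        have h2 : ν i - μ i
            = -(PowerSeries.X * (MvPolynomial.aeval ν (h i) - MvPolynomial.aeval μ (h i))) := by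
          linear_combination hcoord i
        rw [h2, pow_succ']
        exact (mul_dvd_mul_left PowerSeries.X h1).neg_right
    funext i
    have hz : ν i - μ i = 0 := by
      ext j
      have := key (j + 1) i
      rw [PowerSeries.X_pow_dvd_iff] at this
      simpa using this j (Nat.lt_succ_self j)
    exact sub_eq_zero.mp hz
  · -- Surjectivity
    intro w
    -- iterative approximations
    let seq : ℕ → Fin n → PowerSeries A := fun k =>
      Nat.rec (fun i => w i)
        (fun _ prev i => w i - PowerSeries.X * MvPolynomial.aeval prev (h i)) k
    have seq_succ : ∀ k i, seq (k + 1) i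
        = w i - PowerSeries.X * MvPolynomial.aeval (seq k) (h i) := fun k i => rfl
    have dvd_step : ∀ k, ∀ i,
        (PowerSeries.X : PowerSeries A) ^ (k + 1) ∣ (seq (k + 1) i - seq k i) := by
      intro k
      induction k with
      | zero =>
        intro i
        rw [seq_succ]
        show (PowerSeries.X : PowerSeries A) ^ 1 ∣ _
        rw [pow_one]
        have : w i - PowerSeries.X * MvPolynomial.aeval (seq 0) (h i) - seq 0 i
            = -(PowerSeries.X * MvPolynomial.aeval (seq 0) (h i)) := by
          show _ - _ - w i = _
          ring
        rw [this]
        exact (Dvd.intro _ rfl).neg_right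
      | succ k ih =>
        intro i
        have h1 := aeval_sub_dvd (k + 1) (seq (k + 1)) (seq k) ih (h i)
        have h2 : seq (k + 2) i - seq (k + 1) i
            = -(PowerSeries.X * (MvPolynomial.aeval (seq (k + 1)) (h i)
                - MvPolynomial.aeval (seq k) (h i))) := by
          rw [show seq (k + 2) i = seq ((k + 1) + 1) i from rfl, seq_succ (k + 1), seq_succ k]
          ring
        rw [h2, pow_succ']
        exact (mul_dvd_mul_left PowerSeries.X h1).neg_right
    have stab : ∀ l k m, l < k → k ≤ m → ∀ i,
        PowerSeries.coeff l (seq m i) = PowerSeries.coeff l (seq k i) := by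
      intro l k m hlk hkm i
      induction m with
      | zero =>
        have : k = 0 := Nat.le_zero.mp hkm
        rw [this]
      | succ m ih =>
        rcases Nat.lt_or_ge k (m + 1) with hk | hk
        · have h1 := dvd_step m i
          rw [PowerSeries.X_pow_dvd_iff] at h1
          have h2 := h1 l (lt_of_lt_of_le hlk (Nat.le_of_lt_succ hk) |>.trans_le (Nat.le_succ m))
          rw [map_sub, sub_eq_zero] at h2
          rw [h2]
          exact ih (Nat.le_of_lt_succ hk)
        · have : k = m + 1 := le_antisymm hkm hk
          rw [this]
    -- the fixed point
    set ν : Fin n → PowerSeries A :=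
      fun i => PowerSeries.mk (fun l => PowerSeries.coeff l (seq (l + 1) i)) with hν
    have coeff_ν : ∀ l k i, l < k →
        PowerSeries.coeff l (ν i) = PowerSeries.coeff l (seq k i) := by
      intro l k i hlk
      rw [hν]
      simp only [PowerSeries.coeff_mk]
      exact (stab l (l + 1) k (Nat.lt_succ_self l) hlk i).symm
    have hν_dvd : ∀ k i, (PowerSeries.X : PowerSeries A) ^ k ∣ (ν i - seq k i) := by
      intro k i
      rw [PowerSeries.X_pow_dvd_iff]
      intro m hm
      rw [map_sub, coeff_ν m k i hm, sub_self]
    refine ⟨ν, ?_⟩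
    funext i
    ext j
    have hdvd : (PowerSeries.X : PowerSeries A) ^ (j + 1) ∣
        (ν i + PowerSeries.X * MvPolynomial.aeval ν (h i) - w i) := by
      have e1 : ν i + PowerSeries.X * MvPolynomial.aeval ν (h i) - w i
          = (ν i - seq (j + 1) i)
            + PowerSeries.X * (MvPolynomial.aeval ν (h i)
              - MvPolynomial.aeval (seq j) (h i)) := by
        rw [seq_succ]; ring
      rw [e1]
      refine dvd_add (hν_dvd (j + 1) i) ?_
      rw [pow_succ']
      exact mul_dvd_mul_left _ (aeval_sub_dvd j ν (seq j) (fun i' => hν_dvd j i') (h i))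
    rw [PowerSeries.X_pow_dvd_iff] at hdvd
    have := hdvd j (Nat.lt_succ_self j)
    rw [map_sub, sub_eq_zero] at this
    exact this
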